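/- If (f,g) is a binary Type-II complementary array pair of size 2×2×···×2 (m factors), i.e., F(z)^2 + G(z)^2 = 2∏_{k=1}^m(1+z_k^2), then there exist constants c_0,c_1,...,c_m, c' ∈ Z_2 such that f(x) = Σ_{1≤i<j≤m} x_i x_j + Σ_{i=1}^m c_i x_i + c_0 and g(x) = f(x) + Σ_{i=1}^m x_i + c'. -/

import Mathlib

open MvPolynomial Finset

/-- Generating function of a Boolean function `f : {0,1}^m → Z_2`:
`F(z) = Σ_{x∈{0,1}^m} (-1)^{f(x)} z_1^{x_1} ⋯ z_m^{x_m}` over `ℤ`. -/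
noncomputable def genFun {m : ℕ} (f : (Fin m → ZMod 2) → ZMod 2) :
    MvPolynomial (Fin m) ℤ :=
  ∑ x : Fin m → ZMod 2,
    MvPolynomial.C ((-1 : ℤ) ^ (f x).val) * ∏ i, MvPolynomial.X i ^ (x i).val

/-- `(f,g)` is a binary Type-II complementary array pair of size `2×⋯×2`. -/
noncomputable def IsTypeIIPair {m : ℕ} (f g : (Fin m → ZMod 2) → ZMod 2) : Prop :=
  genFun f ^ 2 + genFun g ^ 2 = 2 * ∏ k, (1 + MvPolynomial.X k ^ 2)

/-! ### `ZMod 2` helpers -/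

lemma z2_cases (u : ZMod 2) : u = 0 ∨ u = 1 := by revert u; decide
lemma z2_pow_add (u v : ZMod 2) : ((-1:ℤ))^((u+v).val) = (-1)^u.val * (-1)^v.val := by
  revert u v; decide
lemma z2_val_inj : ∀ (u v : ZMod 2), u.val = v.val → u = v := by decide
lemma z2_add_self (u : ZMod 2) : u + u = 0 := by revert u; decide
lemma z2_aab : ∀ a b : ZMod 2, a + (a + b) = b := by decide
lemma z2_sq : ∀ u : ZMod 2, ((-1:ℤ)^u.val)^2 = 1 := by decide
lemma z2_eps : ∀ u v : ZMod 2, (-1:ℤ)^u.val * (-1)^v.val = -1 → v = u + 1 := by decide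
lemma z2_four : ∀ a b c d : ZMod 2,
    (-1:ℤ)^a.val * (-1)^b.val + (-1:ℤ)^c.val * (-1)^d.val = 0 → a + b + c + d = 1 := by decide
lemma z2_lin' : ∀ p q c d : ZMod 2, (p + c) + d + c + (q + d) = 1 → q = p + 1 := by decide
lemma z2_val_le (u : ZMod 2) : u.val ≤ 1 := by revert u; decide
lemma z2_val_one : ∀ u : ZMod 2, u.val = 1 → u = 1 := by decide

lemma sum_zmod2 {M : Type*} [AddCommMonoid M] (h : ZMod 2 → M) :
    ∑ x : ZMod 2, h x = h 0 + h 1 := by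
  rw [show (Finset.univ : Finset (ZMod 2)) = {0, 1} from by decide]
  rw [Finset.sum_insert (by decide), Finset.sum_singleton]

lemma z2_pow_sum {ι : Type*} (s : Finset ι) (x : ι → ZMod 2) :
    ((-1:ℤ))^((∑ i ∈ s, x i).val) = ∏ i ∈ s, (-1:ℤ)^((x i).val) := by
  induction s using Finset.cons_induction with
  | empty => simp
  | cons a s ha ih => rw [Finset.sum_cons, Finset.prod_cons, z2_pow_add, ih]

/-! ### Coefficients of `genFun` -/

noncomputable def Dd {m : ℕ} (x : Fin m → ZMod 2) : Fin m →₀ ℕ :=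
  Finsupp.equivFunOnFinite.symm (fun i => (x i).val)

lemma Dd_apply {m : ℕ} (x : Fin m → ZMod 2) (i : Fin m) : Dd x i = (x i).val := rfl

lemma Dd_inj {m : ℕ} {x y : Fin m → ZMod 2} (h : Dd x = Dd y) : x = y := by
  funext i
  exact z2_val_inj _ _ (by rw [← Dd_apply x i, ← Dd_apply y i, h])

lemma genFun_eq {m : ℕ} (f : (Fin m → ZMod 2) → ZMod 2) :
    genFun f = ∑ x : Fin m → ZMod 2, monomial (Dd x) ((-1:ℤ)^((f x).val)) := by
  unfold genFun
  refine Finset.sum_congr rfl fun x _ => ?_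
  rw [monomial_eq]
  congr 1
  rw [Finsupp.prod_fintype]
  · exact Finset.prod_congr rfl fun i _ => rfl
  · intro i; exact pow_zero _

lemma coeff_genFun {m : ℕ} (f : (Fin m → ZMod 2) → ZMod 2) (x : Fin m → ZMod 2) :
    coeff (Dd x) (genFun f) = (-1:ℤ)^((f x).val) := by
  rw [genFun_eq, coeff_sum]
  rw [Finset.sum_eq_single x]
  · rw [coeff_monomial, if_pos rfl]
  · intro y _ hy
    rw [coeff_monomial, if_neg (fun hc => hy (Dd_inj hc))]
  · intro hx; exact absurd (Finset.mem_univ x) hx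

lemma coeff_genFun_ne {m : ℕ} {f : (Fin m → ZMod 2) → ZMod 2} {u : Fin m →₀ ℕ}
    (h : coeff u (genFun f) ≠ 0) : ∃ x, Dd x = u := by
  by_contra hc
  push_neg at hc
  apply h
  rw [genFun_eq, coeff_sum]
  exact Finset.sum_eq_zero fun y _ => by rw [coeff_monomial, if_neg (hc y)]

/-- the indicator function of `i` -/
def dd {m : ℕ} (i : Fin m) : Fin m → ZMod 2 := fun j => if j = i then 1 else 0

lemma Dd_dd {m : ℕ} (i : Fin m) : Dd (dd i) = Finsupp.single i 1 := by
  ext j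
  rw [Dd_apply, Finsupp.single_apply, dd]
  by_cases h : j = i
  · subst h; simp; decide
  · simp [h, Ne.symm h]

lemma Dd_zero {m : ℕ} : Dd (0 : Fin m → ZMod 2) = 0 := by
  ext j; rw [Dd_apply]; simp

lemma coeff_mul_top {m : ℕ} (f g : (Fin m → ZMod 2) → ZMod 2) :
    coeff (Dd (fun _ => 1) + Dd (fun _ => 1)) (genFun f * genFun g)
      = (-1:ℤ)^((f (fun _ => 1)).val) * (-1:ℤ)^((g (fun _ => 1)).val) := by
  rw [coeff_mul]
  rw [Finset.sum_eq_single (Dd (fun _ => (1:ZMod 2)), Dd (fun _ => (1:ZMod 2)))]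
  · rw [coeff_genFun, coeff_genFun]
  · rintro ⟨u, v⟩ hm hne
    by_contra hz
    have hu : coeff u (genFun f) ≠ 0 := fun h0 => hz (by rw [h0, zero_mul])
    have hv : coeff v (genFun g) ≠ 0 := fun h0 => hz (by rw [h0, mul_zero])
    obtain ⟨x, rfl⟩ := coeff_genFun_ne hu
    obtain ⟨y, rfl⟩ := coeff_genFun_ne hv
    rw [HasAntidiagonal.mem_antidiagonal] at hm
    have hxy : ∀ i, (x i).val + (y i).val = 2 := by
      intro i
      have := DFunLike.congr_fun hm i
      simpa [Finsupp.add_apply, Dd_apply, show ((1:ZMod 2)).val = 1 from rfl] using this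
    have hx1 : x = fun _ => 1 := by
      funext i
      refine z2_val_one _ ?_
      have h1 := z2_val_le (x i); have h2 := z2_val_le (y i); have := hxy i; omega
    have hy1 : y = fun _ => 1 := by
      funext i
      refine z2_val_one _ ?_
      have h1 := z2_val_le (x i); have h2 := z2_val_le (y i); have := hxy i; omega
    exact hne (by rw [hx1, hy1])
  · intro hmem
    apply absurd _ hmem
    rw [HasAntidiagonal.mem_antidiagonal]

lemma antidiagonal_single {m : ℕ} (i : Fin m) :
    Finset.HasAntidiagonal.antidiagonal (Finsupp.single i 1 : Fin m →₀ ℕ) =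
      {((Finsupp.single i 1 : Fin m →₀ ℕ), 0), (0, Finsupp.single i 1)} := by
  ext ⟨u, v⟩
  rw [HasAntidiagonal.mem_antidiagonal]
  simp only [Finset.mem_insert, Finset.mem_singleton, Prod.mk.injEq]
  constructor
  · intro h
    have happ : ∀ j, u j + v j = (Finsupp.single i 1 : Fin m →₀ ℕ) j := fun j => by
      rw [← h]; rfl
    have hsing : ∀ j, (Finsupp.single i 1 : Fin m →₀ ℕ) j = if i = j then 1 else 0 :=
      fun j => Finsupp.single_apply
    by_cases hui : u i = 0
    · right
      have hu0 : u = 0 := by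
        ext j
        have h1 := happ j
        have h2 := hsing j
        simp only [Finsupp.coe_zero, Pi.zero_apply]
        rcases eq_or_ne i j with rfl | hj
        · exact hui
        · rw [h2, if_neg hj] at h1; omega
      refine ⟨hu0, ?_⟩
      rw [hu0, zero_add] at h; exact h
    · left
      have hv0 : v = 0 := by
        ext j
        have h1 := happ j
        have h2 := hsing j
        simp only [Finsupp.coe_zero, Pi.zero_apply]
        rcases eq_or_ne i j with rfl | hj
        · rw [h2, if_pos rfl] at h1
          have hne : u i ≠ 0 := hui
          omega
        · rw [h2, if_neg hj] at h1; omega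
      refine ⟨?_, hv0⟩
      rw [hv0, add_zero] at h; exact h
  · rintro (⟨rfl, rfl⟩ | ⟨rfl, rfl⟩)
    · rw [add_zero]
    · rw [zero_add]

lemma coeff_mul_single {m : ℕ} (f g : (Fin m → ZMod 2) → ZMod 2) (i : Fin m) :
    coeff (Finsupp.single i 1) (genFun f * genFun g)
      = (-1:ℤ)^((f (dd i)).val) * (-1:ℤ)^((g 0).val)
        + (-1:ℤ)^((f 0).val) * (-1:ℤ)^((g (dd i)).val) := by
  rw [coeff_mul, antidiagonal_single, Finset.sum_insert, Finset.sum_singleton]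
  · rw [← Dd_dd, ← Dd_zero, coeff_genFun, coeff_genFun, coeff_genFun, coeff_genFun]
  · simp only [Finset.mem_singleton, Prod.mk.injEq, not_and]
    intro hs
    exact absurd hs (by simp [Finsupp.single_eq_zero])

/-! ### Substitution homomorphisms -/

lemma genFun_congr {m : ℕ} {f g : (Fin m → ZMod 2) → ZMod 2} (h : ∀ x, f x = g x) :
    genFun f = genFun g := by
  rw [show f = g from funext h]

lemma genFun_add_const {m : ℕ} (f : (Fin m → ZMod 2) → ZMod 2) (c : ZMod 2) :
    genFun (fun x => f x + c) = C ((-1:ℤ)^c.val) * genFun f := by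
  unfold genFun
  rw [Finset.mul_sum]
  refine Finset.sum_congr rfl fun x _ => ?_
  rw [z2_pow_add, map_mul]
  ring

noncomputable def negA (m : ℕ) : MvPolynomial (Fin m) ℤ →ₐ[ℤ] MvPolynomial (Fin m) ℤ :=
  aeval (fun i => - X i)

lemma negA_genFun {m : ℕ} (f : (Fin m → ZMod 2) → ZMod 2) :
    negA m (genFun f) = genFun (fun x => f x + ∑ i, x i) := by
  unfold genFun negA
  rw [map_sum]
  refine Finset.sum_congr rfl fun x _ => ?_
  rw [map_mul, map_prod, aeval_C, algebraMap_eq]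
  have h1 : ∀ i : Fin m, (aeval (fun i => -(X i)) :
        MvPolynomial (Fin m) ℤ →ₐ[ℤ] MvPolynomial (Fin m) ℤ)
      (X i ^ (x i).val) = C ((-1:ℤ)^((x i).val)) * X i ^ (x i).val := by
    intro i
    rw [map_pow, aeval_X, neg_pow, map_pow, map_neg, map_one]
  rw [Finset.prod_congr rfl fun i _ => h1 i, Finset.prod_mul_distrib,
    ← map_prod (C : ℤ →+* MvPolynomial (Fin m) ℤ) (fun i => (-1:ℤ)^((x i).val)) univ,
    ← mul_assoc, ← map_mul, ← z2_pow_sum, ← z2_pow_add]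

noncomputable def subT (m : ℕ) (t : ℤ) :
    MvPolynomial (Fin (m+1)) ℤ →ₐ[ℤ] MvPolynomial (Fin m) ℤ :=
  aeval (Fin.cons (C t) X)

lemma subT_term {m : ℕ} (t : ℤ) (a : ℤ) (x0 : ZMod 2) (y : Fin m → ZMod 2) :
    (aeval (Fin.cons (C t) X : Fin (m+1) → MvPolynomial (Fin m) ℤ))
      ((C a : MvPolynomial (Fin (m+1)) ℤ)
        * ∏ i : Fin (m+1), X i ^ ((Fin.cons x0 y : Fin (m+1) → ZMod 2) i).val)
    = C a * ((C t) ^ x0.val * ∏ i : Fin m, X i ^ (y i).val) := by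
  rw [map_mul, map_prod, aeval_C, algebraMap_eq]
  congr 1
  rw [Fin.prod_univ_succ]
  simp only [map_pow, aeval_X, Fin.cons_zero, Fin.cons_succ]

lemma consEquiv_apply' {m : ℕ} (p : ZMod 2 × (Fin m → ZMod 2)) :
    (Fin.consEquiv (fun _ : Fin (m+1) => ZMod 2)) p = Fin.cons p.1 p.2 := rfl

lemma subT_genFun {m : ℕ} (t : ℤ) (f : (Fin (m+1) → ZMod 2) → ZMod 2) :
    subT m t (genFun f) = genFun (fun x => f (Fin.cons 0 x))
      + C t * genFun (fun x => f (Fin.cons 1 x)) := by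
  unfold genFun subT
  rw [map_sum]
  rw [← Equiv.sum_comp (Fin.consEquiv (fun _ : Fin (m+1) => ZMod 2))
    (fun x => (aeval (Fin.cons (C t) X))
      (C ((-1 : ℤ) ^ (f x).val) * ∏ i, X i ^ (x i).val))]
  rw [Fintype.sum_prod_type]
  simp only [consEquiv_apply']
  rw [show (∑ x0 : ZMod 2, ∑ y : Fin m → ZMod 2,
      (aeval (Fin.cons (C t) X : Fin (m+1) → MvPolynomial (Fin m) ℤ))
        (C ((-1 : ℤ) ^ (f (Fin.cons x0 y)).val)
          * ∏ i : Fin (m+1), X i ^ ((Fin.cons x0 y : Fin (m+1) → ZMod 2) i).val))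
    = ∑ x0 : ZMod 2, ∑ y : Fin m → ZMod 2,
        C ((-1 : ℤ) ^ (f (Fin.cons x0 y)).val)
          * ((C t) ^ x0.val * ∏ i : Fin m, X i ^ (y i).val) from
    Finset.sum_congr rfl fun x0 _ => Finset.sum_congr rfl fun y _ => subT_term t _ x0 y]
  rw [sum_zmod2]
  congr 1
  · refine Finset.sum_congr rfl fun y _ => ?_
    norm_num
  · rw [Finset.mul_sum]
    refine Finset.sum_congr rfl fun y _ => ?_
    have : ((1 : ZMod 2)).val = 1 := rfl
    rw [this, pow_one]
    ring

lemma subT_rhs {m : ℕ} (t : ℤ) :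
    subT m t (2 * ∏ k : Fin (m+1), (1 + X k ^ 2))
      = 2 * ((1 + (C t)^2) * ∏ k : Fin m, (1 + X k ^ 2)) := by
  unfold subT
  rw [map_mul, map_prod, map_ofNat]
  congr 1
  rw [Fin.prod_univ_succ]
  simp only [map_add, map_one, map_pow, aeval_X, Fin.cons_zero, Fin.cons_succ]

/-! ### misc helpers -/

lemma mvp_two_ne (m : ℕ) : (2 : MvPolynomial (Fin m) ℤ) ≠ 0 := by
  intro hh
  have h2 := congrArg constantCoeff hh
  rw [map_ofNat, map_zero] at h2
  norm_num at h2

lemma mvp_four_ne (m : ℕ) : (4 : MvPolynomial (Fin m) ℤ) ≠ 0 := by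
  intro hh
  have h2 := congrArg constantCoeff hh
  rw [map_ofNat, map_zero] at h2
  norm_num at h2

lemma apply_cons {m : ℕ} (F : (Fin (m+1) → ZMod 2) → ZMod 2) (x0 : ZMod 2)
    (x' : Fin m → ZMod 2) :
    F (Fin.cons x0 x') = F (Fin.cons 0 x')
      + x0 * (F (Fin.cons 0 x') + F (Fin.cons 1 x')) := by
  rcases z2_cases x0 with h | h <;> subst h
  · rw [zero_mul, add_zero]
  · rw [one_mul]; exact (z2_aab _ _).symm

lemma quad_split (m : ℕ) (x : Fin (m+1) → ZMod 2) :
    (∑ p ∈ Finset.univ.filter (fun p : Fin (m+1) × Fin (m+1) => p.1 < p.2),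
        x p.1 * x p.2)
    = x 0 * (∑ i : Fin m, x i.succ)
      + ∑ p ∈ Finset.univ.filter (fun p : Fin m × Fin m => p.1 < p.2),
          x p.1.succ * x p.2.succ := by
  rw [Finset.sum_filter, Finset.sum_filter]
  rw [Fintype.sum_prod_type]
  rw [Fin.sum_univ_succ
    (fun i : Fin (m+1) => ∑ j : Fin (m+1), if i < j then x i * x j else 0)]
  rw [Fintype.sum_prod_type]
  congr 1
  · rw [Fin.sum_univ_succ (fun j : Fin (m+1) => if (0:Fin (m+1)) < j then x 0 * x j else 0)]
    simp [Fin.succ_pos, Finset.mul_sum]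
  · refine Finset.sum_congr rfl fun i _ => ?_
    rw [Fin.sum_univ_succ (fun j : Fin (m+1) => if i.succ < j then x i.succ * x j else 0)]
    simp [Fin.succ_lt_succ_iff]

lemma dd_sum {m : ℕ} (i : Fin m) : ∑ j, dd i j = 1 := by
  simp [dd]

lemma lin_dd {m : ℕ} (a : Fin m → ZMod 2) (i : Fin m) : ∑ j, a j * dd i j = a i := by
  simp [dd, mul_ite]

lemma quad_zero_dd {m : ℕ} (i : Fin m) :
    (∑ p ∈ Finset.univ.filter (fun p : Fin m × Fin m => p.1 < p.2),
      dd i p.1 * dd i p.2) = 0 := by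
  refine Finset.sum_eq_zero fun p hp => ?_
  rw [Finset.mem_filter] at hp
  rcases eq_or_ne p.1 i with h1 | h1
  · have h2 : p.2 ≠ i := by rw [← h1]; exact (ne_of_gt hp.2)
    simp [dd, h2]
  · simp [dd, h1]

theorem typeII_pair_is_standard (m : ℕ) (f g : (Fin m → ZMod 2) → ZMod 2)
    (h : IsTypeIIPair f g) :
    ∃ (c : Fin m → ZMod 2) (c0 c' : ZMod 2),
      (∀ x, f x = (∑ p ∈ Finset.univ.filter (fun p : Fin m × Fin m => p.1 < p.2),
          x p.1 * x p.2) + (∑ i, c i * x i) + c0) ∧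
      (∀ x, g x = f x + (∑ i, x i) + c') := by
  induction m with
  | zero =>
    refine ⟨(fun i => i.elim0), f (fun i => i.elim0),
      f (fun i => i.elim0) + g (fun i => i.elim0), ?_, ?_⟩
    · intro x
      have hx : x = fun i => i.elim0 := funext fun i => i.elim0
      subst hx
      simp
    · intro x
      have hx : x = fun i => i.elim0 := funext fun i => i.elim0
      subst hx
      simpa using (z2_aab (f fun i => i.elim0) (g fun i => i.elim0)).symm
  | succ m ih =>
    have h' : genFun f ^ 2 + genFun g ^ 2 = 2 * ∏ k : Fin (m+1), (1 + X k ^ 2) := h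
    have h0 := congrArg (subT m 0) h'
    have h1 := congrArg (subT m 1) h'
    have hm1 := congrArg (subT m (-1)) h'
    simp only [map_add, map_pow, subT_genFun, subT_rhs, map_zero, map_one, map_neg] at h0 h1 hm1
    have pair0 : genFun (fun x => f (Fin.cons 0 x)) ^ 2
        + genFun (fun x => g (Fin.cons 0 x)) ^ 2
        = 2 * ∏ k : Fin m, (1 + X k ^ 2) := by
      linear_combination h0
    have pair1 : genFun (fun x => f (Fin.cons 1 x)) ^ 2
        + genFun (fun x => g (Fin.cons 1 x)) ^ 2
        = 2 * ∏ k : Fin m, (1 + X k ^ 2) := by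
      have h2 : (2 : MvPolynomial (Fin m) ℤ)
          * (genFun (fun x => f (Fin.cons 1 x)) ^ 2
            + genFun (fun x => g (Fin.cons 1 x)) ^ 2)
          = 2 * (2 * ∏ k : Fin m, (1 + X k ^ 2)) := by
        linear_combination h1 + hm1 - 2 * pair0
      exact mul_left_cancel₀ (mvp_two_ne m) h2
    have cross : genFun (fun x => f (Fin.cons 0 x)) * genFun (fun x => f (Fin.cons 1 x))
        + genFun (fun x => g (Fin.cons 0 x)) * genFun (fun x => g (Fin.cons 1 x)) = 0 := by
      have h4 : (4 : MvPolynomial (Fin m) ℤ)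
          * (genFun (fun x => f (Fin.cons 0 x)) * genFun (fun x => f (Fin.cons 1 x))
            + genFun (fun x => g (Fin.cons 0 x)) * genFun (fun x => g (Fin.cons 1 x)))
          = 4 * 0 := by
        linear_combination h1 - hm1
      exact mul_left_cancel₀ (mvp_four_ne m) h4
    obtain ⟨a0, c00, c0', hf0, hg0⟩ := ih (fun x => f (Fin.cons 0 x)) (fun x => g (Fin.cons 0 x)) pair0
    obtain ⟨a1, c10, c1', hf1, hg1⟩ := ih (fun x => f (Fin.cons 1 x)) (fun x => g (Fin.cons 1 x)) pair1
    -- rewrite the generating functions of g₀, g₁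
    have hB0 : genFun (fun x => g (Fin.cons 0 x))
        = C ((-1:ℤ)^c0'.val) * negA m (genFun (fun x => f (Fin.cons 0 x))) := by
      rw [genFun_congr hg0, genFun_add_const (fun x => f (Fin.cons 0 x) + ∑ i, x i) c0',
        ← negA_genFun]
    have hB1 : genFun (fun x => g (Fin.cons 1 x))
        = C ((-1:ℤ)^c1'.val) * negA m (genFun (fun x => f (Fin.cons 1 x))) := by
      rw [genFun_congr hg1, genFun_add_const (fun x => f (Fin.cons 1 x) + ∑ i, x i) c1',
        ← negA_genFun]
    have hcross2 : genFun (fun x => f (Fin.cons 0 x)) * genFun (fun x => f (Fin.cons 1 x))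
        + C ((-1:ℤ)^c0'.val * (-1:ℤ)^c1'.val)
          * (genFun (fun x => f (Fin.cons 0 x) + ∑ i, x i)
            * genFun (fun x => f (Fin.cons 1 x) + ∑ i, x i)) = 0 := by
      rw [← negA_genFun, ← negA_genFun, map_mul (C : ℤ →+* MvPolynomial (Fin m) ℤ)]
      rw [hB0, hB1] at cross
      linear_combination cross
    -- top coefficient: forces c0' + c1' = 1
    have htop := congrArg (coeff (Dd (fun _ => (1:ZMod 2)) + Dd (fun _ => (1:ZMod 2)))) hcross2
    rw [coeff_add, coeff_C_mul, coeff_zero, coeff_mul_top, coeff_mul_top] at htop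
    beta_reduce at htop
    rw [z2_pow_add (f (Fin.cons 0 fun _ => 1)) (∑ i : Fin m, (1:ZMod 2)),
      z2_pow_add (f (Fin.cons 1 fun _ => 1)) (∑ i : Fin m, (1:ZMod 2))] at htop
    have hs := z2_sq (∑ i : Fin m, (1:ZMod 2))
    rw [pow_two] at hs
    have hab : ((-1:ℤ)^((f (Fin.cons 0 fun _ => 1)).val)
        * (-1:ℤ)^((f (Fin.cons 1 fun _ => 1)).val)) ≠ 0 := by
      exact mul_ne_zero (pow_ne_zero _ (by norm_num)) (pow_ne_zero _ (by norm_num))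
    have hfac : ((-1:ℤ)^((f (Fin.cons 0 fun _ => 1)).val)
          * (-1:ℤ)^((f (Fin.cons 1 fun _ => 1)).val))
        * (1 + (-1:ℤ)^c0'.val * (-1:ℤ)^c1'.val) = 0 := by
      linear_combination htop - ((-1:ℤ)^c0'.val * (-1:ℤ)^c1'.val
        * ((-1:ℤ)^((f (Fin.cons 0 fun _ => 1)).val)
          * (-1:ℤ)^((f (Fin.cons 1 fun _ => 1)).val))) * hs
    have hEm1 : (-1:ℤ)^c0'.val * (-1:ℤ)^c1'.val = -1 := by
      rcases mul_eq_zero.mp hfac with hzz | hzz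
      · exact absurd hzz hab
      · linarith
    have hc' : c1' = c0' + 1 := z2_eps _ _ hEm1
    -- single coefficients: force a1 i = a0 i + 1
    have key : ∀ i : Fin m, a1 i = a0 i + 1 := by
      intro i
      have hi := congrArg (coeff (Finsupp.single i 1)) hcross2
      rw [coeff_add, coeff_C_mul, coeff_zero, coeff_mul_single, coeff_mul_single, hEm1] at hi
      simp only [Pi.zero_apply, Finset.sum_const_zero, add_zero, dd_sum] at hi
      rw [z2_pow_add (f (Fin.cons 0 (dd i))) 1, z2_pow_add (f (Fin.cons 1 (dd i))) 1] at hi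
      have v1 : ((1:ZMod 2)).val = 1 := rfl
      rw [v1, pow_one] at hi
      have hw : (-1:ℤ)^((f (Fin.cons 0 (dd i))).val) * (-1:ℤ)^((f (Fin.cons 1 0)).val)
          + (-1:ℤ)^((f (Fin.cons 0 0)).val) * (-1:ℤ)^((f (Fin.cons 1 (dd i))).val) = 0 := by
        have h2w : ((-1:ℤ)^((f (Fin.cons 0 (dd i))).val) * (-1:ℤ)^((f (Fin.cons 1 0)).val)
            + (-1:ℤ)^((f (Fin.cons 0 0)).val) * (-1:ℤ)^((f (Fin.cons 1 (dd i))).val))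
            + ((-1:ℤ)^((f (Fin.cons 0 (dd i))).val) * (-1:ℤ)^((f (Fin.cons 1 0)).val)
            + (-1:ℤ)^((f (Fin.cons 0 0)).val) * (-1:ℤ)^((f (Fin.cons 1 (dd i))).val)) = 0 := by
          linear_combination hi
        linarith
      have hz4 := z2_four _ _ _ _ hw
      have h00 : f (Fin.cons 0 (0 : Fin m → ZMod 2)) = c00 := by
        rw [hf0]; simp
      have h10 : f (Fin.cons 1 (0 : Fin m → ZMod 2)) = c10 := by
        rw [hf1]; simp
      have h0d : f (Fin.cons 0 (dd i)) = a0 i + c00 := by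
        rw [hf0, quad_zero_dd, lin_dd, zero_add]
      have h1d : f (Fin.cons 1 (dd i)) = a1 i + c10 := by
        rw [hf1, quad_zero_dd, lin_dd, zero_add]
      rw [h00, h10, h0d, h1d] at hz4
      exact z2_lin' _ _ _ _ hz4
    -- f₁ in terms of f₀
    have hff10 : ∀ y : Fin m → ZMod 2,
        f (Fin.cons 1 y) = f (Fin.cons 0 y) + (∑ j, y j) + (c00 + c10) := by
      intro y
      rw [hf1 y, hf0 y]
      have hsum : ∑ j, a1 j * y j = (∑ j, a0 j * y j) + ∑ j, y j := by
        rw [← Finset.sum_add_distrib]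
        refine Finset.sum_congr rfl fun j _ => ?_
        rw [key j, add_mul, one_mul]
      rw [hsum]
      have hcc := z2_add_self c00
      linear_combination -hcc
    -- decomposition of f and g
    have hdecf : ∀ x : Fin (m+1) → ZMod 2,
        f x = f (Fin.cons 0 (Fin.tail x))
          + x 0 * (f (Fin.cons 0 (Fin.tail x)) + f (Fin.cons 1 (Fin.tail x))) := by
      intro x
      have hax := apply_cons f (x 0) (Fin.tail x)
      rw [Fin.cons_self_tail] at hax
      exact hax
    have hdecg : ∀ x : Fin (m+1) → ZMod 2,
        g x = g (Fin.cons 0 (Fin.tail x))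
          + x 0 * (g (Fin.cons 0 (Fin.tail x)) + g (Fin.cons 1 (Fin.tail x))) := by
      intro x
      have hax := apply_cons g (x 0) (Fin.tail x)
      rw [Fin.cons_self_tail] at hax
      exact hax
    refine ⟨Fin.cons (c00 + c10) a0, c00, c0', ?_, ?_⟩
    · intro x
      have h01 : f (Fin.cons 0 (Fin.tail x)) + f (Fin.cons 1 (Fin.tail x))
          = (∑ j, Fin.tail x j) + (c00 + c10) := by
        rw [hff10 (Fin.tail x)]
        linear_combination (z2_add_self (f (Fin.cons 0 (Fin.tail x))))
      rw [hdecf x, h01, hf0 (Fin.tail x)]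
      rw [quad_split m x]
      rw [Fin.sum_univ_succ]
      simp only [Fin.cons_zero, Fin.cons_succ, Fin.tail]
      ring
    · intro x
      rw [hdecg x, hdecf x, Fin.sum_univ_succ]
      rw [hg0 (Fin.tail x), hg1 (Fin.tail x), hc', hff10 (Fin.tail x)]
      simp only [Fin.tail]
      have hzz := z2_add_self (x 0 * ((∑ i : Fin m, x i.succ) + c0'))
      linear_combination hzz
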